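/- In the Moyal algebra, the star commutator of two covariant coordinates X̂^μ = x^μ + θ^{μν} Â_ν satisfies [X̂^μ, X̂^ν]_⋆ = i θ^{μν} + i θ^{μα} θ^{νβ} F̂_{αβ}, where F̂_{αβ} = ∂_α Â_β − ∂_β Â_α − i[Â_α, Â_β]_⋆. -/
import Mathlib


/-- In the Moyal algebra, with covariant coordinates X̂^μ = x^μ + θ^{μν}Â_ν, the
star commutator satisfies
[X̂^μ, X̂^ν]_⋆ = i θ^{μν} + i θ^{μα}θ^{νβ} F̂_{αβ},
where F̂_{αβ} = ∂_α Â_β − ∂_β Â_α − i[Â_α, Â_β]_⋆. The Moyal algebra is modelled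
abstractly: an associative ℂ-algebra A with derivations ∂_ρ, coordinate elements
x^μ satisfying [x^μ, u]_⋆ = iθ^{μρ}∂_ρ u and ∂_ρ x^ν = δ_ρ^ν. -/
theorem covariant_coordinates_commutator {n : ℕ} {A : Type*} [Ring A] [Algebra ℂ A]
    (θ : Matrix (Fin n) (Fin n) ℝ) (hθ : ∀ μ ν, θ μ ν = - θ ν μ)
    (x Ahat : Fin n → A) (pd : Fin n → A →ₗ[ℂ] A)
    (hLeib : ∀ ρ (u v : A), pd ρ (u * v) = pd ρ u * v + u * pd ρ v)
    (hx : ∀ μ (u : A), x μ * u - u * x μ = Complex.I • ∑ ρ, ((θ μ ρ : ℝ) : ℂ) • pd ρ u)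
    (hpdx : ∀ ρ ν, pd ρ (x ν) = if ρ = ν then (1 : A) else 0)
    (Xhat : Fin n → A) (hXhat : ∀ μ, Xhat μ = x μ + ∑ ν, ((θ μ ν : ℝ) : ℂ) • Ahat ν)
    (Fhat : Fin n → Fin n → A)
    (hF : ∀ α β, Fhat α β = pd α (Ahat β) - pd β (Ahat α)
        - Complex.I • (Ahat α * Ahat β - Ahat β * Ahat α)) :
    ∀ μ ν, Xhat μ * Xhat ν - Xhat ν * Xhat μ
      = Complex.I • (((θ μ ν : ℝ) : ℂ) • (1 : A))
        + Complex.I • ∑ α, ∑ β, (((θ μ α : ℝ) : ℂ) * ((θ ν β : ℝ) : ℂ)) • Fhat α β := by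
  intro μ ν
  set S : Fin n → A := fun μ => ∑ α, ((θ μ α : ℝ) : ℂ) • Ahat α with hS
  have hXS : ∀ μ, Xhat μ = x μ + S μ := hXhat
  -- expand the commutator into four pieces
  have key : Xhat μ * Xhat ν - Xhat ν * Xhat μ
      = (x μ * x ν - x ν * x μ) + (x μ * S ν - S ν * x μ)
        - (x ν * S μ - S μ * x ν) + (S μ * S ν - S ν * S μ) := by
    rw [hXS, hXS]; noncomm_ring
  -- piece 1
  have h1 : x μ * x ν - x ν * x μ = Complex.I • (((θ μ ν : ℝ) : ℂ) • (1 : A)) := by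
    rw [hx]
    congr 1
    rw [Finset.sum_eq_single ν]
    · simp [hpdx]
    · intro b _ hb; simp [hpdx, hb]
    · simp
  -- piece 2
  have h2 : ∀ μ' ν', x μ' * S ν' - S ν' * x μ'
      = Complex.I • ∑ α, ∑ β,
          (((θ μ' α : ℝ) : ℂ) * ((θ ν' β : ℝ) : ℂ)) • pd α (Ahat β) := by
    intro μ' ν'
    rw [hx]
    congr 1
    refine Finset.sum_congr rfl fun α _ => ?_
    rw [hS]
    simp only [map_sum, map_smul, Finset.smul_sum, smul_smul]
  -- piece 3, rewritten with swapped sums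
  have h3 : x ν * S μ - S μ * x ν
      = Complex.I • ∑ α, ∑ β,
          (((θ μ α : ℝ) : ℂ) * ((θ ν β : ℝ) : ℂ)) • pd β (Ahat α) := by
    rw [h2 ν μ]
    congr 1
    rw [Finset.sum_comm]
    refine Finset.sum_congr rfl fun α _ => Finset.sum_congr rfl fun β _ => ?_
    rw [mul_comm]
  -- piece 4
  have h4 : S μ * S ν - S ν * S μ
      = ∑ α, ∑ β, (((θ μ α : ℝ) : ℂ) * ((θ ν β : ℝ) : ℂ)) •
          (Ahat α * Ahat β - Ahat β * Ahat α) := by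
    have e1 : S μ * S ν = ∑ α, ∑ β,
        (((θ μ α : ℝ) : ℂ) * ((θ ν β : ℝ) : ℂ)) • (Ahat α * Ahat β) := by
      rw [hS, Finset.sum_mul]
      refine Finset.sum_congr rfl fun α _ => ?_
      rw [Finset.mul_sum]
      refine Finset.sum_congr rfl fun β _ => ?_
      rw [smul_mul_assoc, mul_smul_comm, smul_smul]
    have e2 : S ν * S μ = ∑ α, ∑ β,
        (((θ μ α : ℝ) : ℂ) * ((θ ν β : ℝ) : ℂ)) • (Ahat β * Ahat α) := by
      rw [hS, Finset.sum_mul]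
      simp only [Finset.mul_sum]
      rw [Finset.sum_comm]
      refine Finset.sum_congr rfl fun α _ => Finset.sum_congr rfl fun β _ => ?_
      rw [smul_mul_assoc, mul_smul_comm, smul_smul, mul_comm]
    rw [e1, e2, ← Finset.sum_sub_distrib]
    refine Finset.sum_congr rfl fun α _ => ?_
    rw [← Finset.sum_sub_distrib]
    exact Finset.sum_congr rfl fun β _ => (smul_sub _ _ _).symm
  -- expand the RHS sum of Fhat
  have hFs : ∑ α, ∑ β, (((θ μ α : ℝ) : ℂ) * ((θ ν β : ℝ) : ℂ)) • Fhat α β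
      = (∑ α, ∑ β, (((θ μ α : ℝ) : ℂ) * ((θ ν β : ℝ) : ℂ)) • pd α (Ahat β))
        - (∑ α, ∑ β, (((θ μ α : ℝ) : ℂ) * ((θ ν β : ℝ) : ℂ)) • pd β (Ahat α))
        - Complex.I • ∑ α, ∑ β, (((θ μ α : ℝ) : ℂ) * ((θ ν β : ℝ) : ℂ)) •
            (Ahat α * Ahat β - Ahat β * Ahat α) := by
    have e : ∀ α β, (((θ μ α : ℝ) : ℂ) * ((θ ν β : ℝ) : ℂ)) • Fhat α β
        = (((θ μ α : ℝ) : ℂ) * ((θ ν β : ℝ) : ℂ)) • pd α (Ahat β)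
          - (((θ μ α : ℝ) : ℂ) * ((θ ν β : ℝ) : ℂ)) • pd β (Ahat α)
          - Complex.I • ((((θ μ α : ℝ) : ℂ) * ((θ ν β : ℝ) : ℂ)) •
              (Ahat α * Ahat β - Ahat β * Ahat α)) := by
      intro α β
      rw [hF, smul_sub, smul_sub, smul_comm]
    simp only [e, Finset.sum_sub_distrib, Finset.smul_sum]
  rw [key, h1, h2, h3, h4, hFs]
  set P := ∑ α, ∑ β, (((θ μ α : ℝ) : ℂ) * ((θ ν β : ℝ) : ℂ)) • pd α (Ahat β)
  set Q := ∑ α, ∑ β, (((θ μ α : ℝ) : ℂ) * ((θ ν β : ℝ) : ℂ)) • pd β (Ahat α)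
  set R := ∑ α, ∑ β, (((θ μ α : ℝ) : ℂ) * ((θ ν β : ℝ) : ℂ)) •
      (Ahat α * Ahat β - Ahat β * Ahat α)
  have : Complex.I • (P - Q - Complex.I • R)
      = Complex.I • P - Complex.I • Q + R := by
    rw [smul_sub, smul_sub, smul_smul, Complex.I_mul_I, neg_smul, one_smul, sub_neg_eq_add]
  rw [this]
  abel
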